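/- For every n ≥ 2 and every p with 2 ≤ p ≤ n, the graph G = K_{p-1} + \overline{K_{n-p+1}} (the join of the complete graph on p-1 vertices with the empty graph on n-p+1 vertices) has local distance antimagic chromatic number χ_ld(G) = p. -/

import Mathlib

open Finset

open Classical in
/-- The weight of a vertex: sum of labels of its neighbors. -/
noncomputable def ldWeight {V : Type*} (G : SimpleGraph V) [Fintype V] (f : V → ℕ) (v : V) : ℕ :=
  ∑ x ∈ Finset.univ, if G.Adj v x then f x else 0

/-- `f` is a local distance antimagic labeling of `G`: a bijection onto `{1,…,|V|}`
with adjacent vertices getting distinct weights. -/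
def IsLDAL {V : Type*} (G : SimpleGraph V) [Fintype V] (f : V → ℕ) : Prop :=
  Set.BijOn f Set.univ (Set.Icc 1 (Fintype.card V)) ∧
    ∀ ⦃u v : V⦄, G.Adj u v → ldWeight G f u ≠ ldWeight G f v

/-- The local distance antimagic chromatic number: minimum number of distinct weights. -/
noncomputable def chiLD {V : Type*} (G : SimpleGraph V) [Fintype V] : ℕ :=
  sInf {k | ∃ f : V → ℕ, IsLDAL G f ∧ (Finset.univ.image (ldWeight G f)).card = k}

/-- The join `G + H` of two graphs. -/
def graphJoin {α β : Type*} (G : SimpleGraph α) (H : SimpleGraph β) :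
    SimpleGraph (α ⊕ β) where
  Adj x y :=
    match x, y with
    | Sum.inl a, Sum.inl b => G.Adj a b
    | Sum.inr a, Sum.inr b => H.Adj a b
    | Sum.inl _, Sum.inr _ => True
    | Sum.inr _, Sum.inl _ => True
  symm := ⟨by
    rintro (a | a) (b | b) h
    exacts [h.symm, trivial, trivial, h.symm]⟩
  loopless := ⟨by
    rintro (a | a) h
    exacts [h.ne rfl, h.ne rfl]⟩

/-- The lexicographic product `G[H]`. -/
def lexProd {α β : Type*} (G : SimpleGraph α) (H : SimpleGraph β) :
    SimpleGraph (α × β) where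
  Adj x y := G.Adj x.1 y.1 ∨ (x.1 = y.1 ∧ H.Adj x.2 y.2)
  symm := ⟨by
    rintro x y (h | ⟨e, h⟩)
    exacts [Or.inl h.symm, Or.inr ⟨e.symm, h.symm⟩]⟩
  loopless := ⟨by
    rintro x (h | ⟨e, h⟩)
    exacts [h.ne rfl, h.ne rfl]⟩

/-- The friendship graph `F_n`: `n` triangles sharing the central vertex `none`. -/
def friendship (n : ℕ) : SimpleGraph (Option (Fin n × Fin 2)) where
  Adj x y := x ≠ y ∧ (x = none ∨ y = none ∨ ∃ i a b, x = some (i, a) ∧ y = some (i, b))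
  symm := ⟨by
    rintro x y ⟨hne, h⟩
    refine ⟨hne.symm, ?_⟩
    rcases h with h | h | ⟨i, a, b, hx, hy⟩
    · exact Or.inr (Or.inl h)
    · exact Or.inl h
    · exact Or.inr (Or.inr ⟨i, b, a, hy, hx⟩)⟩
  loopless := ⟨fun x h => h.1 rfl⟩

/-- The bistar `B_{n,n}`: two adjacent centers, each with `n` leaves. -/
def bistar (n : ℕ) : SimpleGraph (Bool ⊕ Bool × Fin n) where
  Adj x y :=
    match x, y with
    | Sum.inl a, Sum.inl b => a ≠ b
    | Sum.inl a, Sum.inr (c, _) => a = c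
    | Sum.inr (c, _), Sum.inl a => a = c
    | Sum.inr _, Sum.inr _ => False
  symm := ⟨by
    rintro (a | ⟨c, i⟩) (b | ⟨d, j⟩) h
    exacts [h.symm, h, h, h.elim]⟩
  loopless := ⟨by
    rintro (a | ⟨c, i⟩) h
    exacts [h rfl, h]⟩

section MyAux
variable {q m : ℕ}

private abbrev GJ' (q m : ℕ) : SimpleGraph (Fin q ⊕ Fin m) :=
  graphJoin (⊤ : SimpleGraph (Fin q)) (⊥ : SimpleGraph (Fin m))

private lemma gj_wL (g : Fin q ⊕ Fin m → ℕ) (a : Fin q) :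
    ldWeight (GJ' q m) g (Sum.inl a) + g (Sum.inl a) = ∑ x, g x := by
  classical
  have hadj : ∀ x : Fin q ⊕ Fin m, (GJ' q m).Adj (Sum.inl a) x ↔ x ≠ Sum.inl a := by
    rintro (b | j)
    · constructor
      · intro h hc; exact h (by injection hc with h'; exact h'.symm)
      · intro h hb; exact h (by rw [hb])
    · exact Iff.intro (fun _ h => by cases h) (fun _ => trivial)
  have h1 : ldWeight (GJ' q m) g (Sum.inl a) = ∑ x ∈ univ.erase (Sum.inl a), g x := by
    rw [ldWeight]
    rw [Finset.sum_congr rfl (fun x _ => if_congr (hadj x) rfl rfl)]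
    rw [← Finset.sum_filter, Finset.filter_ne']
  rw [h1, Finset.sum_erase_add _ _ (mem_univ _)]

private lemma gj_wR (g : Fin q ⊕ Fin m → ℕ) (j : Fin m) :
    ldWeight (GJ' q m) g (Sum.inr j) = ∑ a : Fin q, g (Sum.inl a) := by
  classical
  rw [ldWeight, Fintype.sum_sum_type]
  have h1 : ∀ a : Fin q, (if (GJ' q m).Adj (Sum.inr j) (Sum.inl a) then g (Sum.inl a) else 0)
      = g (Sum.inl a) := fun a => if_pos trivial
  have h2 : ∀ j' : Fin m, (if (GJ' q m).Adj (Sum.inr j) (Sum.inr j') then g (Sum.inr j') else 0)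
      = 0 := fun j' => if_neg (fun h => h)
  simp only [h1, h2, Finset.sum_const_zero, add_zero]

private lemma gj_lower (hm : 0 < m) (f : Fin q ⊕ Fin m → ℕ)
    (hf : IsLDAL (GJ' q m) f) :
    q + 1 ≤ (Finset.univ.image (ldWeight (GJ' q m) f)).card := by
  classical
  have hinj : Function.Injective f := fun x y h => hf.1.2.1 (Set.mem_univ x) (Set.mem_univ y) h
  have hwinj : Function.Injective (fun a : Fin q => ldWeight (GJ' q m) f (Sum.inl a)) := by
    intro a b h
    simp only at h
    have ha := gj_wL f a
    have hb := gj_wL f b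
    have hfab : f (Sum.inl a) = f (Sum.inl b) := by omega
    have := hinj hfab
    exact Sum.inl.inj this
  set j0 : Fin m := ⟨0, hm⟩ with hj0
  have hne : ∀ a : Fin q,
      ldWeight (GJ' q m) f (Sum.inr j0) ≠ ldWeight (GJ' q m) f (Sum.inl a) :=
    fun a => hf.2 (show (GJ' q m).Adj (Sum.inr j0) (Sum.inl a) from trivial)
  set T := Finset.univ.image (fun a : Fin q => ldWeight (GJ' q m) f (Sum.inl a)) with hT
  have hTcard : T.card = q := by
    rw [hT, Finset.card_image_of_injective _ hwinj, Finset.card_univ, Fintype.card_fin]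
  have hnotmem : ldWeight (GJ' q m) f (Sum.inr j0) ∉ T := by
    intro hmem
    obtain ⟨a, _, ha⟩ := Finset.mem_image.mp hmem
    exact hne a ha.symm
  have hsub : insert (ldWeight (GJ' q m) f (Sum.inr j0)) T
      ⊆ Finset.univ.image (ldWeight (GJ' q m) f) := by
    intro x hx
    rcases Finset.mem_insert.mp hx with h | h
    · exact h ▸ Finset.mem_image_of_mem _ (Finset.mem_univ (Sum.inr j0))
    · obtain ⟨a, _, ha⟩ := Finset.mem_image.mp h
      exact ha ▸ Finset.mem_image_of_mem _ (Finset.mem_univ (Sum.inl a))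
  calc q + 1 = (insert (ldWeight (GJ' q m) f (Sum.inr j0)) T).card := by
        rw [Finset.card_insert_of_notMem hnotmem, hTcard]
    _ ≤ _ := Finset.card_le_card hsub

end MyAux

theorem stmt_2 (n p : ℕ) (hp : 2 ≤ p) (hpn : p ≤ n) :
    chiLD (graphJoin (⊤ : SimpleGraph (Fin (p - 1)))
      (⊥ : SimpleGraph (Fin (n - p + 1)))) = p := by
  classical
  set q := p - 1 with hq
  set m := n - p + 1 with hm'
  have hm : 0 < m := Nat.succ_pos _
  have hcard : Fintype.card (Fin q ⊕ Fin m) = n := by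
    simp only [Fintype.card_sum, Fintype.card_fin]
    omega
  set f0 : Fin q ⊕ Fin m → ℕ := Sum.elim (fun a => a.1 + 1) (fun j => p + j.1) with hf0
  set j0 : Fin m := ⟨0, hm⟩ with hj0
  -- total sums
  have hCR : p ≤ ∑ j : Fin m, f0 (Sum.inr j) := by
    have := Finset.single_le_sum (f := fun j : Fin m => f0 (Sum.inr j))
      (fun i _ => Nat.zero_le _) (Finset.mem_univ j0)
    exact le_trans (Nat.le_add_right p 0) this
  have hS : ∑ x : Fin q ⊕ Fin m, f0 x
      = (∑ a : Fin q, f0 (Sum.inl a)) + ∑ j : Fin m, f0 (Sum.inr j) :=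
    Fintype.sum_sum_type f0
  have hLDAL : IsLDAL (GJ' q m) f0 := by
    constructor
    · rw [hcard]
      refine ⟨?_, ?_, ?_⟩
      · rintro (a | j) -
        · have := a.2
          simp only [hf0, Sum.elim_inl, Set.mem_Icc]
          omega
        · have := j.2
          simp only [hf0, Sum.elim_inr, Set.mem_Icc]
          omega
      · rintro (a | j) - (b | j') - h
        · have := a.2; have := b.2
          simp only [hf0, Sum.elim_inl] at h
          exact congrArg Sum.inl (Fin.ext (by omega))
        · have := a.2
          simp only [hf0, Sum.elim_inl, Sum.elim_inr] at h
          omega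
        · have := b.2
          simp only [hf0, Sum.elim_inl, Sum.elim_inr] at h
          omega
        · simp only [hf0, Sum.elim_inr] at h
          exact congrArg Sum.inr (Fin.ext (by omega))
      · intro k hk
        simp only [Set.mem_Icc] at hk
        by_cases h2 : k ≤ q
        · refine ⟨Sum.inl ⟨k - 1, by omega⟩, Set.mem_univ _, ?_⟩
          simp only [hf0, Sum.elim_inl]
          omega
        · refine ⟨Sum.inr ⟨k - p, by omega⟩, Set.mem_univ _, ?_⟩
          simp only [hf0, Sum.elim_inr]
          omega
    · rintro (a | j) (b | j') hadj heq
      · have hab : a ≠ b := hadj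
        have ha := gj_wL f0 a
        have hb := gj_wL f0 b
        have : f0 (Sum.inl a) = f0 (Sum.inl b) := by omega
        simp only [hf0, Sum.elim_inl] at this
        exact hab (Fin.ext (by omega))
      · -- inl a vs inr j'
        have ha := gj_wL f0 a
        have hr := gj_wR f0 j'
        have haval : f0 (Sum.inl a) = a.1 + 1 := rfl
        have := a.2
        omega
      · have hb := gj_wL f0 b
        have hr := gj_wR f0 j
        have hbval : f0 (Sum.inl b) = b.1 + 1 := rfl
        have := b.2
        omega
      · exact (hadj : False).elim
  have hupper : (Finset.univ.image (ldWeight (GJ' q m) f0)).card ≤ p := by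
    have hsub : Finset.univ.image (ldWeight (GJ' q m) f0)
        ⊆ insert (ldWeight (GJ' q m) f0 (Sum.inr j0))
          (Finset.univ.image (fun a : Fin q => ldWeight (GJ' q m) f0 (Sum.inl a))) := by
      intro x hx
      obtain ⟨v, _, rfl⟩ := Finset.mem_image.mp hx
      cases v with
      | inl a => exact Finset.mem_insert_of_mem (Finset.mem_image_of_mem _ (Finset.mem_univ a))
      | inr j =>
          have : ldWeight (GJ' q m) f0 (Sum.inr j) = ldWeight (GJ' q m) f0 (Sum.inr j0) := by
            rw [gj_wR, gj_wR]
          rw [this]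
          exact Finset.mem_insert_self _ _
    calc (Finset.univ.image (ldWeight (GJ' q m) f0)).card
        ≤ _ := Finset.card_le_card hsub
      _ ≤ (Finset.univ.image (fun a : Fin q => ldWeight (GJ' q m) f0 (Sum.inl a))).card + 1 :=
          Finset.card_insert_le _ _
      _ ≤ (Finset.univ : Finset (Fin q)).card + 1 :=
          Nat.add_le_add_right (Finset.card_image_le) 1
      _ = q + 1 := by rw [Finset.card_univ, Fintype.card_fin]
      _ = p := by omega
  have hlower := gj_lower hm f0 hLDAL
  have hmem : p ∈ {k | ∃ f : Fin q ⊕ Fin m → ℕ, IsLDAL (GJ' q m) f ∧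
      (Finset.univ.image (ldWeight (GJ' q m) f)).card = k} := by
    exact ⟨f0, hLDAL, by omega⟩
  have hlb : ∀ k ∈ {k | ∃ f : Fin q ⊕ Fin m → ℕ, IsLDAL (GJ' q m) f ∧
      (Finset.univ.image (ldWeight (GJ' q m) f)).card = k}, p ≤ k := by
    rintro k ⟨f, hf, rfl⟩
    have := gj_lower hm f hf
    omega
  exact le_antisymm (Nat.sInf_le hmem) (le_csInf ⟨p, hmem⟩ hlb)
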